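/- Let $t \ge 2n+1$ and let $\mathcal{F}$ be a collection of $n$ independent $n$-sets of the cycle $C_t$ such that $(\mathcal{F}, C_t)$ has no rainbow independent $n$-set. Then no two adjacent vertices $i$ and $i+1$ of $C_t$ can both have list number exactly $1$; that is, if $c_{\mathcal{F}}(i)=1$ then $c_{\mathcal{F}}(i-1)\ge 2$ and $c_{\mathcal{F}}(i+1)\ge 2$. -/

import Mathlib

open Finset

/-- A set of vertices is independent: no two of its members are adjacent. -/
def IsIndep {V : Type*} (G : SimpleGraph V) (S : Set V) : Prop :=
  ∀ a ∈ S, ∀ b ∈ S, ¬ G.Adj a b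

/-- `(F, G)` admits a rainbow independent `m`-set: `m` distinct vertices chosen
from `m` distinct members of `F` (one vertex per member) forming an independent set. -/
def RainbowIndep {V : Type*} [DecidableEq V] (G : SimpleGraph V) {k : ℕ}
    (F : Fin k → Finset V) (m : ℕ) : Prop :=
  ∃ (s : Finset (Fin k)) (x : Fin k → V),
    s.card = m ∧ (∀ i ∈ s, x i ∈ F i) ∧ (s.image x).card = m ∧
    IsIndep G (s.image x : Set V)

/-- The cycle `C_t` with vertex set `ZMod t`, consecutive residues adjacent. -/
def cyc (t : ℕ) : SimpleGraph (ZMod t) :=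
  SimpleGraph.fromRel (fun a b => b = a + 1)

lemma natGreedy {ι : Type*} [DecidableEq ι] :
    ∀ (k : ℕ) (s : Finset ι) (S : ι → Finset ℕ), s.card = k →
    (∀ j ∈ s, ∀ v, v ∈ S j → v + 1 ∉ S j) →
    (∀ j ∈ s, k ≤ (S j).card) →
    ∃ x : ι → ℕ, (∀ j ∈ s, x j ∈ S j) ∧
      (∀ j ∈ s, ∀ j' ∈ s, j ≠ j' → x j ≠ x j' ∧ x j' ≠ x j + 1) := by
  intro k
  induction k with
  | zero =>
    intro s S hcard _ _
    have hs : s = ∅ := Finset.card_eq_zero.mp hcard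
    subst hs
    exact ⟨fun _ => 0, by simp, by simp⟩
  | succ k ih =>
    intro s S hcard hind hS
    have hsne : s.Nonempty := Finset.card_pos.mp (by omega)
    have hUne : (s.biUnion S).Nonempty := by
      obtain ⟨j, hj⟩ := hsne
      have h1 : (S j).Nonempty := Finset.card_pos.mp (lt_of_lt_of_le (Nat.succ_pos k) (hS j hj))
      obtain ⟨v, hv⟩ := h1
      exact ⟨v, Finset.mem_biUnion.mpr ⟨j, hj, hv⟩⟩
    set v := (s.biUnion S).min' hUne with hvdef
    obtain ⟨j₀, hj₀s, hj₀⟩ := Finset.mem_biUnion.mp ((s.biUnion S).min'_mem hUne)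
    have hmin : ∀ j ∈ s, ∀ w ∈ S j, v ≤ w := fun j hj w hw =>
      Finset.min'_le _ _ (Finset.mem_biUnion.mpr ⟨j, hj, hw⟩)
    set s' := s.erase j₀ with hs'def
    have hcard' : s'.card = k := by
      rw [hs'def, Finset.card_erase_of_mem hj₀s, hcard]
      omega
    have hsub : ∀ j, (S j) \ {v, v+1} ⊆ S j := fun j => Finset.sdiff_subset
    have hS' : ∀ j ∈ s', k ≤ ((S j) \ {v, v+1}).card := by
      intro j hj
      have hjs : j ∈ s := Finset.mem_of_mem_erase hj
      have hint : ((S j) ∩ {v, v+1}).card ≤ 1 := by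
        by_cases hv1 : v ∈ S j
        · have hss : (S j) ∩ {v, v+1} ⊆ {v} := by
            intro w hw
            rcases Finset.mem_inter.mp hw with ⟨hw1, hw2⟩
            rcases Finset.mem_insert.mp hw2 with h | h
            · simp [h]
            · exfalso
              rw [Finset.mem_singleton.mp h] at hw1
              exact hind j hjs v hv1 hw1
          calc ((S j) ∩ {v, v+1}).card ≤ ({v} : Finset ℕ).card := Finset.card_le_card hss
          _ = 1 := rfl
        · have hss : (S j) ∩ {v, v+1} ⊆ {v+1} := by
            intro w hw
            rcases Finset.mem_inter.mp hw with ⟨hw1, hw2⟩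
            rcases Finset.mem_insert.mp hw2 with h | h
            · exact absurd (h ▸ hw1) hv1
            · exact h
          calc ((S j) ∩ {v, v+1}).card ≤ ({v+1} : Finset ℕ).card := Finset.card_le_card hss
          _ = 1 := rfl
      have h2 : ((S j) \ {v,v+1}).card + ((S j) ∩ {v,v+1}).card = (S j).card :=
        Finset.card_sdiff_add_card_inter _ _
      have h3 := hS j hjs
      omega
    obtain ⟨x₀, hmem₀, hsep₀⟩ := ih s' (fun j => (S j) \ {v, v+1}) hcard'
      (fun j hj w hw hcon => hind j (Finset.mem_of_mem_erase hj) w (hsub j hw) (hsub j hcon))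
      hS'
    have hge : ∀ j ∈ s', v + 2 ≤ x₀ j := by
      intro j hj
      have hw := hmem₀ j hj
      have h1 := hmin j (Finset.mem_of_mem_erase hj) (x₀ j) (hsub j hw)
      have h2 := (Finset.mem_sdiff.mp hw).2
      simp only [Finset.mem_insert, Finset.mem_singleton] at h2
      push_neg at h2
      omega
    refine ⟨Function.update x₀ j₀ v, ?_, ?_⟩
    · intro j hj
      by_cases h : j = j₀
      · subst h; simpa using hj₀
      · rw [Function.update_of_ne h]
        exact hsub j (hmem₀ j (Finset.mem_erase.mpr ⟨h, hj⟩))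
    · intro j hj j' hj' hne
      by_cases h : j = j₀
      · subst h
        rw [Function.update_self, Function.update_of_ne (Ne.symm hne)]
        have := hge j' (Finset.mem_erase.mpr ⟨Ne.symm hne, hj'⟩)
        constructor <;> omega
      · by_cases h' : j' = j₀
        · subst h'
          rw [Function.update_self, Function.update_of_ne h]
          have := hge j (Finset.mem_erase.mpr ⟨h, hj⟩)
          constructor <;> omega
        · rw [Function.update_of_ne h, Function.update_of_ne h']
          exact hsep₀ j (Finset.mem_erase.mpr ⟨h, hj⟩) j' (Finset.mem_erase.mpr ⟨h', hj'⟩) hne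

lemma cast_inj_lt {t u v : ℕ} [NeZero t] (hu : u < t) (hv : v < t) :
    ((u : ZMod t) = (v : ZMod t)) ↔ u = v := by
  constructor
  · intro h
    have h2 := congrArg ZMod.val h
    rwa [ZMod.val_cast_of_lt hu, ZMod.val_cast_of_lt hv] at h2
  · rintro rfl; rfl

lemma cast_eq_le {t u v : ℕ} [NeZero t] (hu : u < t) (hv : v ≤ t) :
    ((u : ZMod t) = (v : ZMod t)) ↔ (u = v ∨ (u = 0 ∧ v = t)) := by
  by_cases hv' : v = t
  · rw [hv', ZMod.natCast_self,
      show (0 : ZMod t) = ((0 : ℕ) : ZMod t) by simp, cast_inj_lt hu (NeZero.pos t)]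
    omega
  · rw [cast_inj_lt hu (by omega)]
    omega

lemma cyc_adj {t : ℕ} {x y : ZMod t} :
    (cyc t).Adj x y ↔ x ≠ y ∧ (y = x + 1 ∨ x = y + 1) := by
  simp [cyc, SimpleGraph.fromRel_adj]

lemma cyc_adj_shift {t : ℕ} (i x y : ZMod t) :
    (cyc t).Adj (i + x) (i + y) ↔ (cyc t).Adj x y := by
  simp [cyc_adj, add_assoc]

lemma cyc_adj_neg_mp {t : ℕ} {x y : ZMod t} (h : (cyc t).Adj (-x) (-y)) :
    (cyc t).Adj x y := by
  rw [cyc_adj] at h ⊢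
  obtain ⟨h1, h2⟩ := h
  refine ⟨fun hc => h1 (by rw [hc]), ?_⟩
  rcases h2 with h | h
  · right; linear_combination h
  · left; linear_combination h

lemma cyc_adj_neg {t : ℕ} (x y : ZMod t) :
    (cyc t).Adj (-x) (-y) ↔ (cyc t).Adj x y :=
  ⟨cyc_adj_neg_mp, fun h => cyc_adj_neg_mp (by simpa [neg_neg] using h)⟩

lemma rainbow_of_offsets {n t : ℕ} [NeZero t] (F : Fin n → Finset (ZMod t)) (i : ZMod t)
    (q : Fin n → ℕ) (hq : ∀ j, q j < t)
    (hmem : ∀ j, i + (q j : ZMod t) ∈ F j)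
    (hsep : ∀ j j', j ≠ j' → q j ≠ q j' ∧ q j' ≠ q j + 1 ∧ q j ≠ q j' + 1 ∧
        ¬(q j' = 0 ∧ q j + 1 = t) ∧ ¬(q j = 0 ∧ q j' + 1 = t)) :
    RainbowIndep (cyc t) F n := by
  set x : Fin n → ZMod t := fun j => i + (q j : ZMod t) with hx
  have hinj : ∀ j j', x j = x j' → j = j' := by
    intro j j' h
    by_contra hne
    have h1 : ((q j : ℕ) : ZMod t) = ((q j' : ℕ) : ZMod t) := by
      rw [hx] at h
      exact add_left_cancel h
    exact (hsep j j' hne).1 ((cast_inj_lt (hq j) (hq j')).mp h1)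
  have hnadj : ∀ j j', ¬ (cyc t).Adj (x j) (x j') := by
    intro j j' hadj
    by_cases hne : j = j'
    · subst hne; exact (cyc t).irrefl hadj
    · have hadj' : (cyc t).Adj ((q j : ℕ) : ZMod t) ((q j' : ℕ) : ZMod t) :=
        (cyc_adj_shift i _ _).mp hadj
      rw [cyc_adj] at hadj'
      obtain ⟨-, h2⟩ := hadj'
      obtain ⟨c1, c2, c3, c4, c5⟩ := hsep j j' hne
      rcases h2 with h | h
      · rw [show ((q j : ZMod t) + 1) = ((q j + 1 : ℕ) : ZMod t) by push_cast; ring] at h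
        rcases (cast_eq_le (hq j') (by have := hq j; omega : q j + 1 ≤ t)).mp h with h' | h'
        · exact c2 h'
        · exact c4 h'
      · rw [show ((q j' : ZMod t) + 1) = ((q j' + 1 : ℕ) : ZMod t) by push_cast; ring] at h
        rcases (cast_eq_le (hq j) (by have := hq j'; omega : q j' + 1 ≤ t)).mp h with h' | h'
        · exact c3 h'
        · exact c5 h'
  refine ⟨Finset.univ, x, by simp, fun j _ => hmem j, ?_, ?_⟩
  · rw [Finset.card_image_of_injOn (fun j _ j' _ h => hinj j j' h)]
    simp
  · intro u hu v hv hadj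
    obtain ⟨j, -, rfl⟩ := Finset.mem_image.mp (Finset.mem_coe.mp hu)
    obtain ⟨j', -, rfl⟩ := Finset.mem_image.mp (Finset.mem_coe.mp hv)
    exact hnadj j j' hadj

lemma zmod_decomp {t : ℕ} [NeZero t] (i v : ZMod t) :
    v = i + (((v - i).val : ℕ) : ZMod t) := by
  rw [(ZMod.natCast_rightInverse (v - i) : (((v - i).val : ℕ) : ZMod t) = v - i)]
  ring

lemma interval_card {t : ℕ} [NeZero t] (G : Finset (ZMod t)) (i : ZMod t) (c₀ m : ℕ)
    (E : Finset (ZMod t))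
    (hcov : ∀ v : ZMod t, ((v - i).val < c₀ ∨ c₀ + m ≤ (v - i).val) → v ∈ E) :
    G.card - (G ∩ E).card ≤
      ((Finset.range m).filter (fun p => i + ((c₀ + p : ℕ) : ZMod t) ∈ G)).card := by
  have key : (G \ E).card ≤
      ((Finset.range m).filter (fun p => i + ((c₀ + p : ℕ) : ZMod t) ∈ G)).card := by
    apply Finset.card_le_card_of_injOn (fun v => (v - i).val - c₀)
    · intro v hv
      obtain ⟨hvG, hvE⟩ := Finset.mem_sdiff.mp hv
      have hbound : c₀ ≤ (v - i).val ∧ (v - i).val < c₀ + m := by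
        by_contra hc
        exact hvE (hcov v (by omega))
      beta_reduce
      rw [Finset.mem_coe, Finset.mem_filter, Finset.mem_range]
      refine ⟨by omega, ?_⟩
      rw [show c₀ + ((v - i).val - c₀) = (v - i).val by omega]
      rw [← zmod_decomp]
      exact hvG
    · intro v hv w hw h
      obtain ⟨hvG, hvE⟩ := Finset.mem_sdiff.mp hv
      obtain ⟨hwG, hwE⟩ := Finset.mem_sdiff.mp hw
      have hv' : c₀ ≤ (v - i).val := by
        by_contra hc; exact hvE (hcov v (by omega))
      have hw' : c₀ ≤ (w - i).val := by
        by_contra hc; exact hwE (hcov w (by omega))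
      have hvw : (v - i).val = (w - i).val := by
        simp only at h
        omega
      calc v = i + (((v - i).val : ℕ) : ZMod t) := zmod_decomp i v
      _ = i + (((w - i).val : ℕ) : ZMod t) := by rw [hvw]
      _ = w := (zmod_decomp i w).symm
  have h4 : (G \ E).card + (G ∩ E).card = G.card := Finset.card_sdiff_add_card_inter G E
  omega

lemma greedy_offsets {n t : ℕ} [NeZero t] (F : Fin n → Finset (ZMod t))
    (hind : ∀ j, IsIndep (cyc t) (F j : Set (ZMod t)))
    (i : ZMod t) (c₀ m : ℕ) (hm : c₀ + m ≤ t)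
    (s : Finset (Fin n))
    (hcard : ∀ j ∈ s, s.card ≤
      ((Finset.range m).filter (fun p => i + ((c₀ + p : ℕ) : ZMod t) ∈ F j)).card) :
    ∃ p : Fin n → ℕ, (∀ j ∈ s, p j < m ∧ i + ((c₀ + p j : ℕ) : ZMod t) ∈ F j) ∧
      (∀ j ∈ s, ∀ j' ∈ s, j ≠ j' → p j ≠ p j' ∧ p j' ≠ p j + 1) := by
  have hind' : ∀ j ∈ s, ∀ w,
      w ∈ (Finset.range m).filter (fun p => i + ((c₀ + p : ℕ) : ZMod t) ∈ F j) →
      w + 1 ∉ (Finset.range m).filter (fun p => i + ((c₀ + p : ℕ) : ZMod t) ∈ F j) := by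
    intro j hj w hw hw1
    rw [Finset.mem_filter, Finset.mem_range] at hw hw1
    have hadj : (cyc t).Adj (i + ((c₀ + w : ℕ) : ZMod t)) (i + ((c₀ + (w + 1) : ℕ) : ZMod t)) := by
      rw [cyc_adj_shift, cyc_adj]
      constructor
      · rw [Ne, cast_inj_lt (by omega) (by omega)]
        omega
      · left; push_cast; ring
    exact hind j _ (Finset.mem_coe.mpr hw.2) _ (Finset.mem_coe.mpr hw1.2) hadj
  obtain ⟨p, hmem, hsep⟩ := natGreedy s.card s
    (fun j => (Finset.range m).filter (fun p => i + ((c₀ + p : ℕ) : ZMod t) ∈ F j)) rfl hind' hcard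
  refine ⟨p, fun j hj => ?_, hsep⟩
  have h := hmem j hj
  rw [Finset.mem_filter, Finset.mem_range] at h
  exact h

lemma pair_card {t : ℕ} (G : Finset (ZMod t)) (hG : IsIndep (cyc t) (G : Set (ZMod t)))
    (u v : ZMod t) (huv : (cyc t).Adj u v) : (G ∩ {u, v}).card ≤ 1 := by
  by_cases hu : u ∈ G
  · have hv : v ∉ G := fun hv => hG u (Finset.mem_coe.mpr hu) v (Finset.mem_coe.mpr hv) huv
    have hss : G ∩ {u, v} ⊆ {u} := by
      intro x hx
      rcases Finset.mem_inter.mp hx with ⟨hx1, hx2⟩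
      rcases Finset.mem_insert.mp hx2 with h | h
      · simp [h]
      · rw [Finset.mem_singleton] at h
        exact absurd (h ▸ hx1) hv
    calc (G ∩ {u, v}).card ≤ ({u} : Finset (ZMod t)).card := Finset.card_le_card hss
    _ = 1 := rfl
  · have hss : G ∩ {u, v} ⊆ {v} := by
      intro x hx
      rcases Finset.mem_inter.mp hx with ⟨hx1, hx2⟩
      rcases Finset.mem_insert.mp hx2 with h | h
      · exact absurd (h ▸ hx1) hu
      · exact h
    calc (G ∩ {u, v}).card ≤ ({v} : Finset (ZMod t)).card := Finset.card_le_card hss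
    _ = 1 := rfl

lemma core (n t : ℕ) (ht : 2 * n + 1 ≤ t) (F : Fin n → Finset (ZMod t))
    (hF : ∀ i, (F i).card = n ∧ IsIndep (cyc t) (F i : Set (ZMod t)))
    (i : ZMod t)
    (h1 : (Finset.univ.filter (fun j => i ∈ F j)).card = 1)
    (h2 : (Finset.univ.filter (fun j => i + 1 ∈ F j)).card ≤ 1) :
    RainbowIndep (cyc t) F n := by
  obtain ⟨a, ha⟩ := Finset.card_eq_one.mp h1
  have hai : i ∈ F a := by
    have h := ha ▸ Finset.mem_singleton_self a
    exact (Finset.mem_filter.mp h).2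
  have huniq : ∀ j, i ∈ F j → j = a := by
    intro j hj
    have h : j ∈ Finset.univ.filter (fun j => i ∈ F j) :=
      Finset.mem_filter.mpr ⟨Finset.mem_univ _, hj⟩
    rw [ha] at h
    exact Finset.mem_singleton.mp h
  have hn1 : 1 ≤ n := a.pos
  have ht3 : 3 ≤ t := by omega
  haveI : NeZero t := ⟨by omega⟩
  have hm1 : ((t - 1 : ℕ) : ZMod t) = -1 := by
    rw [Nat.cast_sub (by omega : 1 ≤ t), ZMod.natCast_self]
    simp
  have hm2 : ((t - 2 : ℕ) : ZMod t) = -2 := by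
    rw [Nat.cast_sub (by omega : 2 ≤ t), ZMod.natCast_self]
    simp
  -- Strategy A : pick i for a, greedy on the interval [i+2, i-2]
  have stratA : (∀ j, j ≠ a → (F j ∩ ({i, i + 1, i - 1} : Finset (ZMod t))).card ≤ 1) →
      RainbowIndep (cyc t) F n := by
    intro hbA
    have hsc : (Finset.univ.erase a).card = n - 1 := by
      rw [Finset.card_erase_of_mem (Finset.mem_univ a), Finset.card_univ, Fintype.card_fin]
    have hcov : ∀ v : ZMod t, ((v - i).val < 2 ∨ 2 + (t - 3) ≤ (v - i).val) →
        v ∈ ({i, i + 1, i - 1} : Finset (ZMod t)) := by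
      intro v hv
      have hval := ZMod.val_lt (v - i)
      have hd : (v - i).val = 0 ∨ (v - i).val = 1 ∨ (v - i).val = t - 1 := by omega
      have hvv := zmod_decomp i v
      simp only [Finset.mem_insert, Finset.mem_singleton]
      rcases hd with h | h | h
      · left; rw [hvv, h]; simp
      · right; left; rw [hvv, h]; simp
      · right; right; rw [hvv, h, hm1]; ring
    have hcardA : ∀ j ∈ Finset.univ.erase a, (Finset.univ.erase a).card ≤
        ((Finset.range (t - 3)).filter (fun p => i + ((2 + p : ℕ) : ZMod t) ∈ F j)).card := by
      intro j hj
      have hja : j ≠ a := (Finset.mem_erase.mp hj).1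
      have hic := interval_card (F j) i 2 (t - 3) {i, i + 1, i - 1} hcov
      have hint := hbA j hja
      have hn := (hF j).1
      rw [hsc]
      omega
    obtain ⟨p, hp, hps⟩ := greedy_offsets F (fun j => (hF j).2) i 2 (t - 3) (by omega)
      (Finset.univ.erase a) hcardA
    apply rainbow_of_offsets F i (fun j => if j = a then 0 else 2 + p j)
    · intro j
      by_cases h : j = a
      · rw [if_pos h]; omega
      · rw [if_neg h]
        have := (hp j (Finset.mem_erase.mpr ⟨h, Finset.mem_univ j⟩)).1
        omega
    · intro j
      by_cases h : j = a
      · subst h; simpa using hai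
      · rw [if_neg h]
        exact (hp j (Finset.mem_erase.mpr ⟨h, Finset.mem_univ j⟩)).2
    · intro j j' hne
      by_cases h : j = a <;> by_cases h' : j' = a
      · exact absurd (h.trans h'.symm) hne
      · have h1' := (hp j' (Finset.mem_erase.mpr ⟨h', Finset.mem_univ j'⟩)).1
        rw [if_pos h, if_neg h']
        omega
      · have h1' := (hp j (Finset.mem_erase.mpr ⟨h, Finset.mem_univ j⟩)).1
        rw [if_neg h, if_pos h']
        omega
      · have hin : j ∈ Finset.univ.erase a := Finset.mem_erase.mpr ⟨h, Finset.mem_univ j⟩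
        have hin' : j' ∈ Finset.univ.erase a := Finset.mem_erase.mpr ⟨h', Finset.mem_univ j'⟩
        have h1' := (hp j hin).1
        have h2' := (hp j' hin').1
        have h3' := hps j hin j' hin' hne
        have h4' := hps j' hin' j hin (Ne.symm hne)
        rw [if_neg h, if_neg h']
        omega
  by_cases hP : ∃ b, i + 1 ∈ F b
  · obtain ⟨b, hbi⟩ := hP
    have huniqb : ∀ j, i + 1 ∈ F j → j = b := by
      intro j hj
      exact Finset.card_le_one.mp h2 j (Finset.mem_filter.mpr ⟨Finset.mem_univ _, hj⟩) b
        (Finset.mem_filter.mpr ⟨Finset.mem_univ _, hbi⟩)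
    have hadj01 : (cyc t).Adj i (i + 1) := by
      rw [cyc_adj]
      constructor
      · intro hc
        have h5 : ((0 : ℕ) : ZMod t) = ((1 : ℕ) : ZMod t) := by
          have h6 := add_left_cancel (show i + 0 = i + 1 by rw [add_zero]; exact hc)
          push_cast
          exact h6
        rw [cast_inj_lt (by omega) (by omega)] at h5
        omega
      · left; rfl
    have hba : b ≠ a := by
      rintro rfl
      exact (hF b).2 i (Finset.mem_coe.mpr hai) (i + 1) (Finset.mem_coe.mpr hbi) hadj01
    have hn2 : 2 ≤ n := by
      by_contra hc
      push_neg at hc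
      have h₁ := a.isLt
      have h₂ := b.isLt
      exact hba (Fin.ext (by omega))
    have ht5 : 5 ≤ t := by omega
    by_cases hA : i - 1 ∈ F b
    · by_cases hB : i + 2 ∈ F a
      · -- Strategy C : pick i+2 for a, i-1 for b, greedy on [i+4, i-3]
        have hadj23 : (cyc t).Adj (i + 2) (i + 3) := by
          rw [cyc_adj]
          constructor
          · intro hc
            have h5 : ((2 : ℕ) : ZMod t) = ((3 : ℕ) : ZMod t) := by
              have h6 := add_left_cancel hc
              push_cast
              exact h6
            rw [cast_inj_lt (by omega) (by omega)] at h5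
            omega
          · left; ring
        have hadjm : (cyc t).Adj (i - 2) (i - 1) := by
          rw [cyc_adj]
          constructor
          · intro hc
            have h6 : (-2 : ZMod t) = -1 := by linear_combination hc
            have h5 : ((1 : ℕ) : ZMod t) = ((2 : ℕ) : ZMod t) := by
              push_cast
              linear_combination h6
            rw [cast_inj_lt (by omega) (by omega)] at h5
            omega
          · left; ring
        have hcovC : ∀ v : ZMod t, ((v - i).val < 4 ∨ 4 + (t - 6) ≤ (v - i).val) →
            v ∈ ({i, i + 1, i + 2, i + 3, i - 2, i - 1} : Finset (ZMod t)) := by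
          intro v hv
          have hval := ZMod.val_lt (v - i)
          have hd : (v - i).val = 0 ∨ (v - i).val = 1 ∨ (v - i).val = 2 ∨ (v - i).val = 3 ∨
              (v - i).val = t - 2 ∨ (v - i).val = t - 1 := by omega
          have hvv := zmod_decomp i v
          simp only [Finset.mem_insert, Finset.mem_singleton]
          rcases hd with h | h | h | h | h | h
          · left; rw [hvv, h]; simp
          · right; left; rw [hvv, h]; simp
          · right; right; left; rw [hvv, h]; norm_num
          · right; right; right; left; rw [hvv, h]; norm_num
          · right; right; right; right; left; rw [hvv, h, hm2]; ring
          · right; right; right; right; right; rw [hvv, h, hm1]; ring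
        have hbmem : b ∈ Finset.univ.erase a := Finset.mem_erase.mpr ⟨hba, Finset.mem_univ b⟩
        have hscC : ((Finset.univ.erase a).erase b).card = n - 2 := by
          rw [Finset.card_erase_of_mem hbmem, Finset.card_erase_of_mem (Finset.mem_univ a),
            Finset.card_univ, Fintype.card_fin]
          omega
        have hcardC : ∀ j ∈ (Finset.univ.erase a).erase b, ((Finset.univ.erase a).erase b).card ≤
            ((Finset.range (t - 6)).filter (fun p => i + ((4 + p : ℕ) : ZMod t) ∈ F j)).card := by
          intro j hj
          have hjb : j ≠ b := (Finset.mem_erase.mp hj).1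
          have hja : j ≠ a := (Finset.mem_erase.mp (Finset.mem_of_mem_erase hj)).1
          have hic := interval_card (F j) i 4 (t - 6) {i, i + 1, i + 2, i + 3, i - 2, i - 1} hcovC
          have hn := (hF j).1
          have hsubC : F j ∩ ({i, i + 1, i + 2, i + 3, i - 2, i - 1} : Finset (ZMod t)) ⊆
              (F j ∩ {i + 2, i + 3}) ∪ (F j ∩ {i - 2, i - 1}) := by
            intro x hx
            rcases Finset.mem_inter.mp hx with ⟨hx1, hx2⟩
            simp only [Finset.mem_insert, Finset.mem_singleton] at hx2
            rcases hx2 with rfl | rfl | rfl | rfl | rfl | rfl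
            · exact absurd (huniq _ hx1) hja
            · exact absurd (huniqb _ hx1) hjb
            · exact Finset.mem_union_left _ (Finset.mem_inter.mpr ⟨hx1, by simp⟩)
            · exact Finset.mem_union_left _ (Finset.mem_inter.mpr ⟨hx1, by simp⟩)
            · exact Finset.mem_union_right _ (Finset.mem_inter.mpr ⟨hx1, by simp⟩)
            · exact Finset.mem_union_right _ (Finset.mem_inter.mpr ⟨hx1, by simp⟩)
          have h23 := pair_card (F j) (hF j).2 (i + 2) (i + 3) hadj23
          have hmm := pair_card (F j) (hF j).2 (i - 2) (i - 1) hadjm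
          have hcu := Finset.card_le_card hsubC
          have hu := Finset.card_union_le (F j ∩ {i + 2, i + 3}) (F j ∩ {i - 2, i - 1})
          rw [hscC]
          omega
        obtain ⟨p, hp, hps⟩ := greedy_offsets F (fun j => (hF j).2) i 4 (t - 6) (by omega)
          ((Finset.univ.erase a).erase b) hcardC
        apply rainbow_of_offsets F i
          (fun j => if j = a then 2 else if j = b then t - 1 else 4 + p j)
        · intro j
          by_cases h : j = a
          · rw [if_pos h]; omega
          · rw [if_neg h]
            by_cases h' : j = b
            · rw [if_pos h']; omega
            · rw [if_neg h']
              have := (hp j (Finset.mem_erase.mpr ⟨h', Finset.mem_erase.mpr ⟨h, Finset.mem_univ j⟩⟩)).1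
              omega
        · intro j
          by_cases h : j = a
          · subst h; rw [if_pos rfl]; simpa using hB
          · rw [if_neg h]
            by_cases h' : j = b
            · subst h'; rw [if_pos rfl, hm1, ← sub_eq_add_neg]; exact hA
            · rw [if_neg h']
              exact (hp j (Finset.mem_erase.mpr ⟨h', Finset.mem_erase.mpr ⟨h, Finset.mem_univ j⟩⟩)).2
        · intro j j' hne
          by_cases h : j = a <;> by_cases h' : j' = a
          · exact absurd (h.trans h'.symm) hne
          · rw [if_pos h, if_neg h']
            by_cases hb' : j' = b
            · rw [if_pos hb']; omega
            · rw [if_neg hb']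
              have := (hp j' (Finset.mem_erase.mpr ⟨hb', Finset.mem_erase.mpr ⟨h', Finset.mem_univ j'⟩⟩)).1
              omega
          · rw [if_neg h, if_pos h']
            by_cases hb : j = b
            · rw [if_pos hb]; omega
            · rw [if_neg hb]
              have := (hp j (Finset.mem_erase.mpr ⟨hb, Finset.mem_erase.mpr ⟨h, Finset.mem_univ j⟩⟩)).1
              omega
          · rw [if_neg h, if_neg h']
            by_cases hb : j = b <;> by_cases hb' : j' = b
            · exact absurd (hb.trans hb'.symm) hne
            · rw [if_pos hb, if_neg hb']
              have := (hp j' (Finset.mem_erase.mpr ⟨hb', Finset.mem_erase.mpr ⟨h', Finset.mem_univ j'⟩⟩)).1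
              omega
            · rw [if_neg hb, if_pos hb']
              have := (hp j (Finset.mem_erase.mpr ⟨hb, Finset.mem_erase.mpr ⟨h, Finset.mem_univ j⟩⟩)).1
              omega
            · have hin : j ∈ (Finset.univ.erase a).erase b :=
                Finset.mem_erase.mpr ⟨hb, Finset.mem_erase.mpr ⟨h, Finset.mem_univ j⟩⟩
              have hin' : j' ∈ (Finset.univ.erase a).erase b :=
                Finset.mem_erase.mpr ⟨hb', Finset.mem_erase.mpr ⟨h', Finset.mem_univ j'⟩⟩
              have h1' := (hp j hin).1
              have h2' := (hp j' hin').1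
              have h3' := hps j hin j' hin' hne
              have h4' := hps j' hin' j hin (Ne.symm hne)
              rw [if_neg hb, if_neg hb']
              omega
      · -- Strategy B : pick i+1 for b, greedy on [i+3, i-1]
        have hcovB : ∀ v : ZMod t, ((v - i).val < 3 ∨ 3 + (t - 3) ≤ (v - i).val) →
            v ∈ ({i, i + 1, i + 2} : Finset (ZMod t)) := by
          intro v hv
          have hval := ZMod.val_lt (v - i)
          have hd : (v - i).val = 0 ∨ (v - i).val = 1 ∨ (v - i).val = 2 := by omega
          have hvv := zmod_decomp i v
          simp only [Finset.mem_insert, Finset.mem_singleton]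
          rcases hd with h | h | h
          · left; rw [hvv, h]; simp
          · right; left; rw [hvv, h]; simp
          · right; right; rw [hvv, h]; norm_num
        have hcardB : ∀ j ∈ Finset.univ.erase b, (Finset.univ.erase b).card ≤
            ((Finset.range (t - 3)).filter (fun p => i + ((3 + p : ℕ) : ZMod t) ∈ F j)).card := by
          intro j hj
          have hjb : j ≠ b := (Finset.mem_erase.mp hj).1
          have hic := interval_card (F j) i 3 (t - 3) {i, i + 1, i + 2} hcovB
          have hn := (hF j).1
          have hscB : (Finset.univ.erase b).card = n - 1 := by
            rw [Finset.card_erase_of_mem (Finset.mem_univ b), Finset.card_univ, Fintype.card_fin]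
          have hint : (F j ∩ ({i, i + 1, i + 2} : Finset (ZMod t))).card ≤ 1 := by
            by_cases hja : j = a
            · subst hja
              have hss : F j ∩ ({i, i + 1, i + 2} : Finset (ZMod t)) ⊆ {i} := by
                intro x hx
                rcases Finset.mem_inter.mp hx with ⟨hx1, hx2⟩
                simp only [Finset.mem_insert, Finset.mem_singleton] at hx2
                rcases hx2 with rfl | rfl | rfl
                · simp
                · exact absurd (huniqb _ hx1).symm hba
                · exact absurd hx1 hB
              calc (F j ∩ ({i, i + 1, i + 2} : Finset (ZMod t))).card
                  ≤ ({i} : Finset (ZMod t)).card := Finset.card_le_card hss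
              _ = 1 := rfl
            · have hss : F j ∩ ({i, i + 1, i + 2} : Finset (ZMod t)) ⊆ {i + 2} := by
                intro x hx
                rcases Finset.mem_inter.mp hx with ⟨hx1, hx2⟩
                simp only [Finset.mem_insert, Finset.mem_singleton] at hx2
                rcases hx2 with rfl | rfl | rfl
                · exact absurd (huniq _ hx1) hja
                · exact absurd (huniqb _ hx1) hjb
                · simp
              calc (F j ∩ ({i, i + 1, i + 2} : Finset (ZMod t))).card
                  ≤ ({i + 2} : Finset (ZMod t)).card := Finset.card_le_card hss
              _ = 1 := rfl
          rw [hscB]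
          omega
        obtain ⟨p, hp, hps⟩ := greedy_offsets F (fun j => (hF j).2) i 3 (t - 3) (by omega)
          (Finset.univ.erase b) hcardB
        apply rainbow_of_offsets F i (fun j => if j = b then 1 else 3 + p j)
        · intro j
          by_cases h : j = b
          · rw [if_pos h]; omega
          · rw [if_neg h]
            have := (hp j (Finset.mem_erase.mpr ⟨h, Finset.mem_univ j⟩)).1
            omega
        · intro j
          by_cases h : j = b
          · subst h; rw [if_pos rfl]; simpa using hbi
          · rw [if_neg h]
            exact (hp j (Finset.mem_erase.mpr ⟨h, Finset.mem_univ j⟩)).2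
        · intro j j' hne
          by_cases h : j = b <;> by_cases h' : j' = b
          · exact absurd (h.trans h'.symm) hne
          · have h1' := (hp j' (Finset.mem_erase.mpr ⟨h', Finset.mem_univ j'⟩)).1
            rw [if_pos h, if_neg h']
            omega
          · have h1' := (hp j (Finset.mem_erase.mpr ⟨h, Finset.mem_univ j⟩)).1
            rw [if_neg h, if_pos h']
            omega
          · have hin : j ∈ Finset.univ.erase b := Finset.mem_erase.mpr ⟨h, Finset.mem_univ j⟩
            have hin' : j' ∈ Finset.univ.erase b := Finset.mem_erase.mpr ⟨h', Finset.mem_univ j'⟩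
            have h1' := (hp j hin).1
            have h2' := (hp j' hin').1
            have h3' := hps j hin j' hin' hne
            have h4' := hps j' hin' j hin (Ne.symm hne)
            rw [if_neg h, if_neg h']
            omega
    · -- i - 1 ∉ F b : strategy A applies
      apply stratA
      intro j hja
      by_cases hjb : j = b
      · subst hjb
        have hss : F j ∩ ({i, i + 1, i - 1} : Finset (ZMod t)) ⊆ {i + 1} := by
          intro x hx
          rcases Finset.mem_inter.mp hx with ⟨hx1, hx2⟩
          simp only [Finset.mem_insert, Finset.mem_singleton] at hx2
          rcases hx2 with rfl | rfl | rfl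
          · exact absurd (huniq _ hx1) hja
          · simp
          · exact absurd hx1 hA
        calc (F j ∩ ({i, i + 1, i - 1} : Finset (ZMod t))).card
            ≤ ({i + 1} : Finset (ZMod t)).card := Finset.card_le_card hss
        _ = 1 := rfl
      · have hss : F j ∩ ({i, i + 1, i - 1} : Finset (ZMod t)) ⊆ {i - 1} := by
          intro x hx
          rcases Finset.mem_inter.mp hx with ⟨hx1, hx2⟩
          simp only [Finset.mem_insert, Finset.mem_singleton] at hx2
          rcases hx2 with rfl | rfl | rfl
          · exact absurd (huniq _ hx1) hja
          · exact absurd (huniqb _ hx1) hjb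
          · simp
        calc (F j ∩ ({i, i + 1, i - 1} : Finset (ZMod t))).card
            ≤ ({i - 1} : Finset (ZMod t)).card := Finset.card_le_card hss
        _ = 1 := rfl
  · -- no set contains i + 1 : strategy A applies
    apply stratA
    intro j hja
    have hss : F j ∩ ({i, i + 1, i - 1} : Finset (ZMod t)) ⊆ {i - 1} := by
      intro x hx
      rcases Finset.mem_inter.mp hx with ⟨hx1, hx2⟩
      simp only [Finset.mem_insert, Finset.mem_singleton] at hx2
      rcases hx2 with rfl | rfl | rfl
      · exact absurd (huniq _ hx1) hja
      · exact absurd ⟨j, hx1⟩ hP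
      · simp
    calc (F j ∩ ({i, i + 1, i - 1} : Finset (ZMod t))).card
        ≤ ({i - 1} : Finset (ZMod t)).card := Finset.card_le_card hss
    _ = 1 := rfl

lemma mem_neg_image {t : ℕ} (G : Finset (ZMod t)) (w : ZMod t) :
    w ∈ G.image (fun x => -x) ↔ -w ∈ G := by
  constructor
  · intro h
    obtain ⟨u, hu, hu2⟩ := Finset.mem_image.mp h
    rw [← hu2, neg_neg]
    exact hu
  · intro h
    exact Finset.mem_image.mpr ⟨-w, h, neg_neg w⟩

lemma rainbow_neg {n t : ℕ} (F : Fin n → Finset (ZMod t))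
    (h : RainbowIndep (cyc t) (fun j => (F j).image (fun x => -x)) n) :
    RainbowIndep (cyc t) F n := by
  obtain ⟨s, x, hs, hmem, him, hind⟩ := h
  refine ⟨s, fun j => - x j, hs, ?_, ?_, ?_⟩
  · intro j hj
    have := hmem j hj
    rw [mem_neg_image] at this
    exact this
  · have himg : s.image (fun j => - x j) = (s.image x).image (fun v => -v) := by
      rw [Finset.image_image]
      rfl
    rw [himg, Finset.card_image_of_injective _ neg_injective, him]
  · intro u hu v hv hadj
    have himg : s.image (fun j => - x j) = (s.image x).image (fun v => -v) := by
      rw [Finset.image_image]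
      rfl
    rw [himg] at hu hv
    obtain ⟨u₀, hu₀, rfl⟩ := Finset.mem_image.mp (Finset.mem_coe.mp hu)
    obtain ⟨v₀, hv₀, rfl⟩ := Finset.mem_image.mp (Finset.mem_coe.mp hv)
    exact hind u₀ (Finset.mem_coe.mpr hu₀) v₀ (Finset.mem_coe.mpr hv₀) ((cyc_adj_neg _ _).mp hadj)

/-- If `t ≥ 2n+1` and `n` independent `n`-sets of `C_t` have no rainbow independent
`n`-set, then no two adjacent vertices both have list number `1`. -/
theorem stmt5 (n t : ℕ) (ht : 2 * n + 1 ≤ t)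
    (F : Fin n → Finset (ZMod t))
    (hF : ∀ i, (F i).card = n ∧ IsIndep (cyc t) (F i : Set (ZMod t)))
    (hno : ¬ RainbowIndep (cyc t) F n) :
    ∀ i : ZMod t, (Finset.univ.filter (fun j => i ∈ F j)).card = 1 →
      2 ≤ (Finset.univ.filter (fun j => i - 1 ∈ F j)).card ∧
      2 ≤ (Finset.univ.filter (fun j => i + 1 ∈ F j)).card := by
  intro i hi
  constructor
  · by_contra hc
    push_neg at hc
    set G : Fin n → Finset (ZMod t) := fun j => (F j).image (fun x => -x) with hGdef
    have hFG : ∀ j, (G j).card = n ∧ IsIndep (cyc t) (G j : Set (ZMod t)) := by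
      intro j
      constructor
      · rw [hGdef]
        rw [Finset.card_image_of_injective _ neg_injective]
        exact (hF j).1
      · intro u hu v hv hadj
        rw [hGdef] at hu hv
        simp only [Finset.mem_coe, mem_neg_image] at hu hv
        exact (hF j).2 (-u) (Finset.mem_coe.mpr hu) (-v) (Finset.mem_coe.mpr hv)
          (by rwa [cyc_adj_neg])
    have hfilt : ∀ w : ZMod t, Finset.univ.filter (fun j => w ∈ G j) =
        Finset.univ.filter (fun j => -w ∈ F j) := by
      intro w
      apply Finset.filter_congr
      intro j _
      simp only [hGdef, mem_neg_image]
    have h1' : (Finset.univ.filter (fun j => (-i) ∈ G j)).card = 1 := by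
      rw [hfilt (-i)]
      simpa using hi
    have h2' : (Finset.univ.filter (fun j => (-i) + 1 ∈ G j)).card ≤ 1 := by
      rw [hfilt (-i + 1)]
      have hrw : -(-i + 1) = i - 1 := by ring
      simp only [hrw]
      omega
    exact hno (rainbow_neg F (core n t ht G hFG (-i) h1' h2'))
  · by_contra hc
    push_neg at hc
    exact hno (core n t ht F hF i hi (by omega))
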